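/- Let V = (Z/2)³ viewed as a vector space over Z/2. Then the orthomodular poset Fact V has exactly 28 atoms and 28 maximal Boolean subalgebras, each maximal Boolean subalgebra has exactly 3 atoms, and each atom lies in exactly 3 maximal Boolean subalgebras. -/

import Mathlib

open Submodule Module Set

private abbrev VV : Type := Fin 3 → ZMod 2

noncomputable local instance : Finite (Submodule (ZMod 2) VV) :=
  Finite.of_injective (fun W => (W : Set VV)) SetLike.coe_injective

lemma zmod2_cases (c : ZMod 2) : c = 0 ∨ c = 1 := by revert c; decide

lemma mem_sp {v x : VV} : x ∈ Submodule.span (ZMod 2) {v} ↔ x = 0 ∨ x = v := by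
  rw [Submodule.mem_span_singleton]
  constructor
  · rintro ⟨c, rfl⟩
    rcases zmod2_cases c with rfl | rfl
    · left; simp
    · right; simp
  · rintro (rfl | rfl)
    · exact ⟨0, by simp⟩
    · exact ⟨1, by simp⟩

lemma sp_inj {v w : VV} (hv : v ≠ 0) (hw : w ≠ 0) (h : Submodule.span (ZMod 2) {v} = Submodule.span (ZMod 2) {w}) : v = w := by
  have : v ∈ Submodule.span (ZMod 2) {w} := h ▸ Submodule.mem_span_singleton_self v
  rcases mem_sp.1 this with rfl | rfl
  · exact absurd rfl hv
  · rfl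

lemma exists_sp {W : Submodule (ZMod 2) VV} (h : Module.finrank (ZMod 2) W = 1) :
    ∃ v ≠ 0, W = Submodule.span (ZMod 2) {v} := by
  have hp : W.IsPrincipal := (Submodule.finrank_le_one_iff_isPrincipal W).1 h.le
  obtain ⟨v, hv⟩ := hp
  refine ⟨v, ?_, hv⟩
  rintro rfl
  rw [hv, Submodule.span_zero_singleton] at h
  rw [finrank_bot] at h
  exact absurd h (by norm_num)

lemma finrank_VV : Module.finrank (ZMod 2) VV = 3 := by
  rw [Module.finrank_pi]; simp

lemma compl_finrank {S T : Submodule (ZMod 2) VV} (h1 : S ⊓ T = ⊥) (h2 : S ⊔ T = ⊤) :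
    Module.finrank (ZMod 2) S + Module.finrank (ZMod 2) T = 3 := by
  have := Submodule.finrank_sup_add_finrank_inf_eq S T
  rw [h1, h2] at this
  simpa [finrank_VV, finrank_top] using this.symm
noncomputable def car (W : Submodule (ZMod 2) VV) : Finset VV :=
  (Set.toFinite (W : Set VV)).toFinset

@[simp] lemma mem_car {W : Submodule (ZMod 2) VV} {x : VV} : x ∈ car W ↔ x ∈ W := by
  simp [car]

lemma car_inj : Function.Injective car := by
  intro S T h
  apply SetLike.coe_injective
  ext x
  simp only [SetLike.mem_coe, ← mem_car, h]

def subOf (t : Finset VV) (h0 : (0:VV) ∈ t) (hadd : ∀ a ∈ t, ∀ b ∈ t, a + b ∈ t) :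
    Submodule (ZMod 2) VV where
  carrier := ↑t
  add_mem' := fun ha hb => hadd _ ha _ hb
  zero_mem' := h0
  smul_mem' := by
    intro c x hx
    rcases zmod2_cases c with rfl | rfl
    · simpa using h0
    · simpa using hx

@[simp] lemma mem_subOf {t : Finset VV} {h0} {hadd} {x : VV} : x ∈ subOf t h0 hadd ↔ x ∈ t :=
  Iff.rfl

lemma car_subOf {t : Finset VV} {h0} {hadd} : car (subOf t h0 hadd) = t := by
  ext x; simp

noncomputable def vecOf (W : Submodule (ZMod 2) VV) : VV := ((car W).erase 0).sum id

lemma vecOf_sp {v : VV} (hv : v ≠ 0) : vecOf (Submodule.span (ZMod 2) {v}) = v := by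
  have he : (car (Submodule.span (ZMod 2) {v})).erase 0 = {v} := by
    ext x
    simp only [Finset.mem_erase, mem_car, mem_sp, Finset.mem_singleton]
    constructor
    · rintro ⟨hx, rfl | rfl⟩ <;> tauto
    · rintro rfl; exact ⟨hv, Or.inr rfl⟩
  rw [vecOf, he, Finset.sum_singleton, id]

lemma vecOf_spec {W : Submodule (ZMod 2) VV} (h : Module.finrank (ZMod 2) W = 1) :
    vecOf W ≠ 0 ∧ W = Submodule.span (ZMod 2) {vecOf W} := by
  obtain ⟨v, hv, rfl⟩ := exists_sp h
  rw [vecOf_sp hv]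
  exact ⟨hv, rfl⟩
def Q1 (p : VV × Finset VV) : Prop :=
  p.1 ≠ 0 ∧ (0:VV) ∈ p.2 ∧ (∀ a ∈ p.2, ∀ b ∈ p.2, a + b ∈ p.2) ∧ p.1 ∉ p.2 ∧
    (∀ x : VV, ∃ z ∈ p.2, z = x ∨ p.1 + z = x)

instance : DecidablePred Q1 := fun p => by unfold Q1; infer_instance

set_option maxHeartbeats 4000000 in
set_option maxRecDepth 100000 in
lemma count1 : {p : VV × Finset VV | Q1 p}.ncard = 28 := by
  rw [Set.ncard_eq_toFinset_card', Set.toFinset_setOf]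
  decide

lemma part1 :
    {ST : Submodule (ZMod 2) VV × Submodule (ZMod 2) VV |
        ST.1 ⊓ ST.2 = ⊥ ∧ ST.1 ⊔ ST.2 = ⊤ ∧ Module.finrank (ZMod 2) ST.1 = 1}.ncard = 28 := by
  set target := {ST : Submodule (ZMod 2) VV × Submodule (ZMod 2) VV |
        ST.1 ⊓ ST.2 = ⊥ ∧ ST.1 ⊔ ST.2 = ⊤ ∧ Module.finrank (ZMod 2) ST.1 = 1} with htarget
  set f : Submodule (ZMod 2) VV × Submodule (ZMod 2) VV → VV × Finset VV :=
    fun p => (vecOf p.1, car p.2) with hf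
  have himg : f '' target = {p | Q1 p} := by
    ext ⟨v, t⟩
    constructor
    · rintro ⟨⟨S, T⟩, ⟨h1, h2, h3⟩, heq⟩
      obtain ⟨hv0, hS⟩ := vecOf_spec h3
      replace h1 : S ⊓ T = ⊥ := h1
      replace h2 : S ⊔ T = ⊤ := h2
      replace hv0 : vecOf S ≠ 0 := hv0
      replace hS : S = Submodule.span (ZMod 2) {vecOf S} := hS
      simp only [hf, Prod.mk.injEq] at heq
      obtain ⟨rfl, rfl⟩ := heq
      refine ⟨hv0, by simp, fun a ha b hb =>
        mem_car.2 (T.add_mem (mem_car.1 ha) (mem_car.1 hb)), ?_, ?_⟩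
      · intro hmem
        have hT : vecOf S ∈ T := mem_car.1 hmem
        have hS' : vecOf S ∈ S := hS.ge (Submodule.mem_span_singleton_self _)
        have : vecOf S ∈ S ⊓ T := Submodule.mem_inf.2 ⟨hS', hT⟩
        rw [h1, Submodule.mem_bot] at this
        exact hv0 this
      · intro x
        have hx : x ∈ S ⊔ T := h2.symm ▸ Submodule.mem_top
        obtain ⟨y, hy, z, hz, hyz⟩ := Submodule.mem_sup.1 hx
        rw [hS] at hy
        rcases mem_sp.1 hy with rfl | rfl
        · exact ⟨z, mem_car.2 hz, Or.inl (by simpa using hyz)⟩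
        · exact ⟨z, mem_car.2 hz, Or.inr hyz⟩
    · rintro ⟨hv, h0, hadd, hvt, hsup⟩
      refine ⟨(Submodule.span (ZMod 2) {v}, subOf t h0 hadd), ⟨?_, ?_, ?_⟩, ?_⟩
      · rw [eq_bot_iff]
        intro x hx
        obtain ⟨hxS, hxT⟩ := Submodule.mem_inf.1 hx
        rcases mem_sp.1 hxS with rfl | rfl
        · simp
        · exact absurd (mem_subOf.1 hxT) hvt
      · rw [Submodule.eq_top_iff']
        intro x
        obtain ⟨z, hz, hcase⟩ := hsup x
        rcases hcase with rfl | hvz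
        · exact Submodule.mem_sup_right (mem_subOf.2 hz)
        · exact Submodule.mem_sup.2
            ⟨v, Submodule.mem_span_singleton_self v, z, mem_subOf.2 hz, hvz⟩
      · exact finrank_span_singleton hv
      · simp [hf, vecOf_sp hv, car_subOf]
  have hinj : Set.InjOn f target := by
    rintro ⟨S₁, T₁⟩ h₁ ⟨S₂, T₂⟩ h₂ heq
    obtain ⟨hv₁, hS₁⟩ := vecOf_spec h₁.2.2
    obtain ⟨hv₂, hS₂⟩ := vecOf_spec h₂.2.2
    replace hS₁ : S₁ = Submodule.span (ZMod 2) {vecOf S₁} := hS₁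
    replace hS₂ : S₂ = Submodule.span (ZMod 2) {vecOf S₂} := hS₂
    simp only [hf, Prod.mk.injEq] at heq
    obtain ⟨e1, e2⟩ := heq
    have : S₁ = S₂ := by rw [hS₁, hS₂, e1]
    exact Prod.ext this (car_inj e2)
  calc target.ncard = (f '' target).ncard := (Set.ncard_image_of_injOn hinj).symm
    _ = 28 := by rw [himg]; exact count1
def Q2 (t : Finset VV) : Prop :=
  (0:VV) ∉ t ∧ t.card = 3 ∧ ∀ x : VV, ∃ f : VV → ZMod 2, (∑ i ∈ t, f i • i) = x

instance : DecidablePred Q2 := fun p => by unfold Q2; infer_instance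

set_option maxHeartbeats 4000000 in
set_option maxRecDepth 100000 in
lemma count2 : {t : Finset VV | Q2 t}.ncard = 28 := by
  rw [Set.ncard_eq_toFinset_card', Set.toFinset_setOf]
  decide

noncomputable def vecsOf (B : Set (Submodule (ZMod 2) VV)) : Finset VV :=
  (Set.toFinite {v : VV | v ≠ 0 ∧ Submodule.span (ZMod 2) {v} ∈ B}).toFinset

@[simp] lemma mem_vecsOf {B : Set (Submodule (ZMod 2) VV)} {v : VV} :
    v ∈ vecsOf B ↔ v ≠ 0 ∧ Submodule.span (ZMod 2) {v} ∈ B := by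
  simp [vecsOf]

lemma sSup_span_image (s : Set VV) :
    sSup ((fun v => Submodule.span (ZMod 2) {v}) '' s) = Submodule.span (ZMod 2) s := by
  rw [sSup_image]
  exact (Submodule.span_eq_iSup_of_singleton_spans _).symm

lemma B_decomp {B : Set (Submodule (ZMod 2) VV)}
    (hB : ∀ W ∈ B, Module.finrank (ZMod 2) W = 1) :
    B = (fun v => Submodule.span (ZMod 2) {v}) '' ↑(vecsOf B) := by
  ext W
  constructor
  · intro hW
    obtain ⟨v, hv, rfl⟩ := exists_sp (hB W hW)
    exact ⟨v, Finset.mem_coe.2 (mem_vecsOf.2 ⟨hv, hW⟩), rfl⟩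
  · rintro ⟨v, hv, rfl⟩
    exact (mem_vecsOf.1 (Finset.mem_coe.1 hv)).2

lemma injOn_sp_nonzero {s : Set VV} (hs : ∀ v ∈ s, v ≠ (0:VV)) :
    Set.InjOn (fun v => Submodule.span (ZMod 2) {v}) s :=
  fun v hv w hw e => sp_inj (hs v hv) (hs w hw) e

lemma part2 :
    {B : Set (Submodule (ZMod 2) VV) |
        B.ncard = 3 ∧ (∀ W ∈ B, Module.finrank (ZMod 2) W = 1) ∧ sSup B = ⊤}.ncard = 28 := by
  set target := {B : Set (Submodule (ZMod 2) VV) |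
      B.ncard = 3 ∧ (∀ W ∈ B, Module.finrank (ZMod 2) W = 1) ∧ sSup B = ⊤} with htarget
  have himg : vecsOf '' target = {t | Q2 t} := by
    ext t
    constructor
    · rintro ⟨B, ⟨h1, h2, h3⟩, rfl⟩
      have hBd := B_decomp h2
      have hnz : ∀ v ∈ (↑(vecsOf B) : Set VV), v ≠ (0:VV) :=
        fun v hv => (mem_vecsOf.1 (Finset.mem_coe.1 hv)).1
      have hcard : (vecsOf B).card = 3 := by
        rw [← Set.ncard_coe_finset]
        rw [hBd, Set.ncard_image_of_injOn (injOn_sp_nonzero hnz)] at h1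
        exact h1
      have hspan : Submodule.span (ZMod 2) (↑(vecsOf B) : Set VV) = ⊤ := by
        rw [← sSup_span_image, ← hBd]; exact h3
      refine ⟨by simp, hcard, fun x => ?_⟩
      obtain ⟨f, -, hf⟩ := mem_span_finset.1
        (show x ∈ Submodule.span (ZMod 2) (↑(vecsOf B) : Set VV) by rw [hspan]; exact Submodule.mem_top)
      exact ⟨f, hf⟩
    · rintro ⟨h0, hc, hs⟩
      set B := (fun v => Submodule.span (ZMod 2) {v}) '' (↑t : Set VV) with hBdef
      have hnz : ∀ v ∈ (↑t : Set VV), v ≠ (0:VV) := by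
        intro v hv hv0; subst hv0; exact h0 (Finset.mem_coe.1 hv)
      have hspan : Submodule.span (ZMod 2) (↑t : Set VV) = ⊤ := by
        rw [Submodule.eq_top_iff']
        intro x
        obtain ⟨f, hf⟩ := hs x
        rw [← hf]
        exact Submodule.sum_mem _ fun i hi => Submodule.smul_mem _ _ (Submodule.subset_span hi)
      refine ⟨B, ⟨?_, ?_, ?_⟩, ?_⟩
      · rw [hBdef, Set.ncard_image_of_injOn (injOn_sp_nonzero hnz), Set.ncard_coe_finset]
        exact hc
      · rintro W ⟨v, hv, rfl⟩
        exact finrank_span_singleton (hnz v hv)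
      · rw [hBdef, sSup_span_image, hspan]
      · ext v
        rw [mem_vecsOf]
        constructor
        · rintro ⟨hv, w, hw, e⟩
          rwa [sp_inj (hnz w hw) hv e] at hw
        · intro hvt
          exact ⟨hnz v (Finset.mem_coe.2 hvt), ⟨v, Finset.mem_coe.2 hvt, rfl⟩⟩
  have hinj : Set.InjOn vecsOf target := by
    intro B₁ h₁ B₂ h₂ e
    rw [B_decomp h₁.2.1, B_decomp h₂.2.1, e]
  calc target.ncard = (vecsOf '' target).ncard := (Set.ncard_image_of_injOn hinj).symm
    _ = 28 := by rw [himg]; exact count2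
lemma part3 (B : Set (Submodule (ZMod 2) VV)) (h1 : B.ncard = 3)
    (h2 : ∀ W ∈ B, Module.finrank (ZMod 2) W = 1) (h3 : sSup B = ⊤) :
    {ST : Submodule (ZMod 2) VV × Submodule (ZMod 2) VV |
        ST.1 ⊓ ST.2 = ⊥ ∧ ST.1 ⊔ ST.2 = ⊤ ∧ Module.finrank (ZMod 2) ST.1 = 1 ∧
        ST.1 ∈ B ∧ ST.2 = sSup (B \ {ST.1})}.ncard = 3 := by
  have key : ∀ L ∈ B, L ⊓ sSup (B \ {L}) = ⊥ ∧ L ⊔ sSup (B \ {L}) = ⊤ := by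
    intro L hL
    set T := sSup (B \ {L}) with hT
    have hsup : L ⊔ T = ⊤ := by
      rw [hT, ← sSup_insert, Set.insert_diff_singleton, Set.insert_eq_of_mem hL, h3]
    refine ⟨?_, hsup⟩
    have hd2 : (B \ {L}).ncard = 2 := by
      rw [Set.ncard_diff_singleton_of_mem hL, h1]
    obtain ⟨A, A', hne, hpair⟩ := Set.ncard_eq_two.1 hd2
    have hA : A ∈ B := (Set.diff_subset (t := {L})) (hpair ▸ Set.mem_insert _ _)
    have hA' : A' ∈ B := (Set.diff_subset (t := {L}))
      (hpair ▸ Set.mem_insert_of_mem _ (Set.mem_singleton _))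
    have hTfr : Module.finrank (ZMod 2) T ≤ 2 := by
      have := Submodule.finrank_sup_add_finrank_inf_eq A A'
      rw [h2 A hA, h2 A' hA'] at this
      have hTeq : T = A ⊔ A' := by rw [hT, hpair, sSup_pair]
      rw [hTeq]
      omega
    have := Submodule.finrank_sup_add_finrank_inf_eq L T
    rw [hsup, h2 L hL] at this
    rw [finrank_top, finrank_VV] at this
    have h0 : Module.finrank (ZMod 2) ↥(L ⊓ T) = 0 := by omega
    exact Submodule.finrank_eq_zero.1 h0
  have hset : {ST : Submodule (ZMod 2) VV × Submodule (ZMod 2) VV |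
        ST.1 ⊓ ST.2 = ⊥ ∧ ST.1 ⊔ ST.2 = ⊤ ∧ Module.finrank (ZMod 2) ST.1 = 1 ∧
        ST.1 ∈ B ∧ ST.2 = sSup (B \ {ST.1})} =
      (fun L => (L, sSup (B \ {L}))) '' B := by
    ext ⟨S, T⟩
    constructor
    · rintro ⟨-, -, -, hSB, hTeq⟩
      replace hSB : S ∈ B := hSB
      replace hTeq : T = sSup (B \ {S}) := hTeq
      exact ⟨S, hSB, by simp [← hTeq]⟩
    · rintro ⟨L, hL, heq⟩
      simp only [Prod.mk.injEq] at heq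
      obtain ⟨rfl, rfl⟩ := heq
      exact ⟨(key L hL).1, (key L hL).2, h2 L hL, hL, rfl⟩
  rw [hset, Set.ncard_image_of_injOn (fun a _ b _ e => congrArg Prod.fst e), h1]
lemma sp_sup_sp_of_ne {T : Submodule (ZMod 2) VV} (hT : Module.finrank (ZMod 2) T = 2)
    {u w : VV} (hu0 : u ≠ 0) (hw0 : w ≠ 0) (huw : u ≠ w) (huT : u ∈ T) (hwT : w ∈ T) :
    Submodule.span (ZMod 2) {u} ⊔ Submodule.span (ZMod 2) {w} = T := by
  set U := Submodule.span (ZMod 2) {u} ⊔ Submodule.span (ZMod 2) {w} with hU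
  have hle : U ≤ T := by
    apply sup_le <;> rw [Submodule.span_le, Set.singleton_subset_iff] <;> assumption
  have hinf : Submodule.span (ZMod 2) {u} ⊓ Submodule.span (ZMod 2) {w} = ⊥ := by
    rw [eq_bot_iff]
    intro x hx
    obtain ⟨hxu, hxw⟩ := Submodule.mem_inf.1 hx
    rcases mem_sp.1 hxu with rfl | rfl
    · simp
    · rcases mem_sp.1 hxw with h | h
      · simp [h]
      · exact absurd h huw
  have hfr : Module.finrank (ZMod 2) U = 2 := by
    have := Submodule.finrank_sup_add_finrank_inf_eq
      (Submodule.span (ZMod 2) {u}) (Submodule.span (ZMod 2) {w})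
    rw [hinf, finrank_span_singleton hu0, finrank_span_singleton hw0] at this
    simpa [← hU] using this
  exact Submodule.eq_of_le_of_finrank_le hle (by rw [hT, hfr])

lemma part4 (S T : Submodule (ZMod 2) VV)
    (hi : S ⊓ T = ⊥) (hs : S ⊔ T = ⊤) (hr : Module.finrank (ZMod 2) S = 1) :
    {B : Set (Submodule (ZMod 2) VV) |
        B.ncard = 3 ∧ (∀ W ∈ B, Module.finrank (ZMod 2) W = 1) ∧ sSup B = ⊤ ∧
        S ∈ B ∧ sSup (B \ {S}) = T}.ncard = 3 := by
  have hrT : Module.finrank (ZMod 2) T = 2 := by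
    have := compl_finrank hi hs; omega
  have hvnotS : ∀ v ∈ T, v ≠ 0 → Submodule.span (ZMod 2) {v} ≠ S := by
    intro v hvT hv0 e
    have hvS : v ∈ S := e ▸ Submodule.mem_span_singleton_self v
    have : v ∈ S ⊓ T := Submodule.mem_inf.2 ⟨hvS, hvT⟩
    rw [hi, Submodule.mem_bot] at this
    exact hv0 this
  set nz : Finset VV := (car T).erase 0 with hnz
  have hmem_nz : ∀ v : VV, v ∈ nz ↔ v ≠ 0 ∧ v ∈ T := by
    intro v; rw [hnz, Finset.mem_erase, mem_car]
  have hcarT : (car T).card = 4 := by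
    have e1 : (car T).card = (T : Set VV).ncard :=
      (Set.ncard_eq_toFinset_card _ (Set.toFinite _)).symm
    haveI : Fintype ↥T := Fintype.ofFinite _
    have e2 : (T : Set VV).ncard = Fintype.card ↥T := by
      rw [← Nat.card_coe_set_eq, Nat.card_eq_fintype_card]; rfl
    have e3 : Fintype.card ↥T = Fintype.card (ZMod 2) ^ Module.finrank (ZMod 2) T :=
      card_eq_pow_finrank
    rw [e1, e2, e3, hrT, ZMod.card]
    decide
  have hnzcard : nz.card = 3 := by
    rw [hnz, Finset.card_erase_of_mem (mem_car.2 T.zero_mem), hcarT]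
  set g : Finset VV → Set (Submodule (ZMod 2) VV) :=
    fun t => insert S ((fun v => Submodule.span (ZMod 2) {v}) '' (↑t : Set VV)) with hg
  have hset : {B : Set (Submodule (ZMod 2) VV) |
        B.ncard = 3 ∧ (∀ W ∈ B, Module.finrank (ZMod 2) W = 1) ∧ sSup B = ⊤ ∧
        S ∈ B ∧ sSup (B \ {S}) = T} = g '' ↑(nz.powersetCard 2) := by
    ext B
    constructor
    · rintro ⟨hn3, hlines, hstop, hSB, hsup⟩
      have hd2 : (B \ {S}).ncard = 2 := by
        rw [Set.ncard_diff_singleton_of_mem hSB, hn3]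
      obtain ⟨W₁, W₂, hWne, hpair⟩ := Set.ncard_eq_two.1 hd2
      have hW₁B : W₁ ∈ B := (Set.diff_subset (t := {S})) (hpair ▸ Set.mem_insert _ _)
      have hW₂B : W₂ ∈ B := (Set.diff_subset (t := {S}))
        (hpair ▸ Set.mem_insert_of_mem _ (Set.mem_singleton _))
      obtain ⟨u, hu0, hWu⟩ := exists_sp (hlines W₁ hW₁B)
      obtain ⟨w, hw0, hWw⟩ := exists_sp (hlines W₂ hW₂B)
      have hT12 : W₁ ⊔ W₂ = T := by rw [← hsup, hpair, sSup_pair]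
      have huT : u ∈ T := by
        rw [← hT12]
        exact Submodule.mem_sup_left (hWu ▸ Submodule.mem_span_singleton_self u)
      have hwT : w ∈ T := by
        rw [← hT12]
        exact Submodule.mem_sup_right (hWw ▸ Submodule.mem_span_singleton_self w)
      have huw : u ≠ w := by
        rintro rfl
        exact hWne (by rw [hWu, hWw])
      refine ⟨{u, w}, ?_, ?_⟩
      · rw [Finset.mem_coe, Finset.mem_powersetCard]
        constructor
        · intro x hx
          rcases Finset.mem_insert.1 hx with rfl | hx
          · exact (hmem_nz x).2 ⟨hu0, huT⟩
          · rw [Finset.mem_singleton] at hx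
            subst hx
            exact (hmem_nz x).2 ⟨hw0, hwT⟩
        · exact Finset.card_pair huw
      · rw [hg]
        show insert S ((fun v => Submodule.span (ZMod 2) {v}) ''
          (↑({u, w} : Finset VV) : Set VV)) = B
        rw [Finset.coe_insert, Finset.coe_singleton, Set.image_insert_eq, Set.image_singleton,
          ← hWu, ← hWw, ← hpair, Set.insert_diff_singleton, Set.insert_eq_of_mem hSB]
    · rintro ⟨t, ht, rfl⟩
      rw [Finset.mem_coe, Finset.mem_powersetCard] at ht
      obtain ⟨hsub, hc2⟩ := ht
      obtain ⟨u, w, huw, rfl⟩ := Finset.card_eq_two.1 hc2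
      have hu := (hmem_nz u).1 (hsub (Finset.mem_insert_self _ _))
      have hw := (hmem_nz w).1 (hsub (Finset.mem_insert_of_mem (Finset.mem_singleton_self _)))
      have himg : (fun v => Submodule.span (ZMod 2) {v}) ''
          (↑({u, w} : Finset VV) : Set VV) =
          {Submodule.span (ZMod 2) {u}, Submodule.span (ZMod 2) {w}} := by
        rw [Finset.coe_insert, Finset.coe_singleton, Set.image_insert_eq, Set.image_singleton]
      have hTuw : Submodule.span (ZMod 2) {u} ⊔ Submodule.span (ZMod 2) {w} = T :=
        sp_sup_sp_of_ne hrT hu.1 hw.1 huw hu.2 hw.2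
      have hspne : Submodule.span (ZMod 2) {u} ≠ Submodule.span (ZMod 2) {w} := by
        intro e
        exact huw (sp_inj hu.1 hw.1 e)
      have hSP : S ∉ ({Submodule.span (ZMod 2) {u}, Submodule.span (ZMod 2) {w}} :
          Set (Submodule (ZMod 2) VV)) := by
        rintro (rfl | rfl)
        · exact hvnotS u hu.2 hu.1 rfl
        · exact hvnotS w hw.2 hw.1 rfl
      have hB : g {u, w} = insert S {Submodule.span (ZMod 2) {u},
          Submodule.span (ZMod 2) {w}} := by
        simp only [hg]; rw [himg]
      rw [Set.mem_setOf_eq, hB]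
      refine ⟨?_, ?_, ?_, Set.mem_insert _ _, ?_⟩
      · rw [Set.ncard_insert_of_notMem hSP, Set.ncard_pair hspne]
      · rintro W hW
        rcases Set.mem_insert_iff.1 hW with rfl | hW
        · exact hr
        · rcases Set.mem_insert_iff.1 hW with rfl | hW
          · exact finrank_span_singleton hu.1
          · rw [Set.mem_singleton_iff] at hW
            subst hW
            exact finrank_span_singleton hw.1
      · rw [sSup_insert, sSup_pair, hTuw, hs]
      · rw [Set.insert_sdiff_self_of_notMem hSP, sSup_pair, hTuw]
  have hinj : Set.InjOn g ↑(nz.powersetCard 2) := by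
    intro t₁ ht₁ t₂ ht₂ e
    rw [Finset.mem_coe, Finset.mem_powersetCard] at ht₁ ht₂
    have key : ∀ t₁ t₂ : Finset VV, t₁ ⊆ nz → t₂ ⊆ nz → g t₁ = g t₂ → t₁ ⊆ t₂ := by
      intro s₁ s₂ hs₁ hs₂ he v hv
      obtain ⟨hv0, hvT⟩ := (hmem_nz v).1 (hs₁ hv)
      have : Submodule.span (ZMod 2) {v} ∈ g s₁ :=
        Set.mem_insert_of_mem _ ⟨v, Finset.mem_coe.2 hv, rfl⟩
      rw [he] at this
      rcases Set.mem_insert_iff.1 this with h | ⟨x, hx, hxe⟩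
      · exact absurd h (hvnotS v hvT hv0)
      · obtain ⟨hx0, -⟩ := (hmem_nz x).1 (hs₂ (Finset.mem_coe.1 hx))
        rwa [← sp_inj hx0 hv0 hxe]
    exact Finset.Subset.antisymm (key t₁ t₂ ht₁.1 ht₂.1 e) (key t₂ t₁ ht₂.1 ht₁.1 e.symm)
  rw [hset, Set.ncard_image_of_injOn hinj, Set.ncard_coe_finset,
    Finset.card_powersetCard, hnzcard]
  decide

theorem stmt_12 :
    {ST : Submodule (ZMod 2) (Fin 3 → ZMod 2) × Submodule (ZMod 2) (Fin 3 → ZMod 2) |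
        ST.1 ⊓ ST.2 = ⊥ ∧ ST.1 ⊔ ST.2 = ⊤ ∧ Module.finrank (ZMod 2) ST.1 = 1}.ncard = 28 ∧
    {B : Set (Submodule (ZMod 2) (Fin 3 → ZMod 2)) |
        B.ncard = 3 ∧ (∀ W ∈ B, Module.finrank (ZMod 2) W = 1) ∧ sSup B = ⊤}.ncard = 28 ∧
    (∀ B : Set (Submodule (ZMod 2) (Fin 3 → ZMod 2)),
      B.ncard = 3 → (∀ W ∈ B, Module.finrank (ZMod 2) W = 1) → sSup B = ⊤ →
      {ST : Submodule (ZMod 2) (Fin 3 → ZMod 2) × Submodule (ZMod 2) (Fin 3 → ZMod 2) |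
          ST.1 ⊓ ST.2 = ⊥ ∧ ST.1 ⊔ ST.2 = ⊤ ∧ Module.finrank (ZMod 2) ST.1 = 1 ∧
          ST.1 ∈ B ∧ ST.2 = sSup (B \ {ST.1})}.ncard = 3) ∧
    (∀ ST : Submodule (ZMod 2) (Fin 3 → ZMod 2) × Submodule (ZMod 2) (Fin 3 → ZMod 2),
      ST.1 ⊓ ST.2 = ⊥ → ST.1 ⊔ ST.2 = ⊤ → Module.finrank (ZMod 2) ST.1 = 1 →
      {B : Set (Submodule (ZMod 2) (Fin 3 → ZMod 2)) |
          B.ncard = 3 ∧ (∀ W ∈ B, Module.finrank (ZMod 2) W = 1) ∧ sSup B = ⊤ ∧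
          ST.1 ∈ B ∧ sSup (B \ {ST.1}) = ST.2}.ncard = 3) := by
  exact ⟨part1, part2, part3, fun ST hi hs hr => part4 ST.1 ST.2 hi hs hr⟩
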